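/- Let Σ be an alphabet with a partial order ⪯. For x, y ∈ Σ^∞, let l_⪯(x,y) = sup{ n ∈ ℕ : x_k ⪯ y_k for all k ≤ n } if x₁ ⪯ y₁, and l_⪯(x,y) = 0 otherwise. Then q_B(x,y) = 2^{-l_⪯(x,y)} (with 2^{-∞} = 0) is a partial quasi-metric on Σ^∞. -/

import Mathlib

open scoped NNReal ENNReal

/-- A nonempty finite or infinite word over an alphabet `α`: letters are indexed
from `1`, the domain of defined letters is an initial segment. -/
structure PWord (α : Type*) where
  toFun : ℕ → Option α
  map_zero' : toFun 0 = none
  map_one' : (toFun 1).isSome = true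
  mono' : ∀ n, 1 ≤ n → (toFun (n + 1)).isSome = true → (toFun n).isSome = true

/-- The length `l(x) ∈ [1,∞]` of a word. -/
noncomputable def PWord.len {α : Type*} (x : PWord α) : ℕ∞ :=
  ⨆ n ∈ {n : ℕ | (x.toFun n).isSome = true}, (n : ℕ∞)

/-- `l_⪯(x,y) = sup{n ∈ ℕ : x_k ⪯ y_k for all k ≤ n}` (and `0` if `x₁ ⋠ y₁`). -/
noncomputable def lcpLe {α : Type*} [PartialOrder α] (x y : PWord α) : ℕ∞ :=
  ⨆ n ∈ {n : ℕ | ∀ k, 1 ≤ k → k ≤ n →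
      ∃ s t, x.toFun k = some s ∧ y.toFun k = some t ∧ s ≤ t}, (n : ℕ∞)

/-- `2^{-m}` for `m ∈ ℕ∞`, with `2^{-∞} = 0`. -/
noncomputable def epow (m : ℕ∞) : ℝ≥0 := WithTop.recTopCoe 0 (fun n => 2⁻¹ ^ n) m

/-- The Baire partial quasi-metric `q_B(x,y) = 2^{-l_⪯(x,y)}`. -/
noncomputable def qB {α : Type*} [PartialOrder α] (x y : PWord α) : ℝ≥0 :=
  epow (lcpLe x y)

lemma nat_le_biSup_iff (S : Set ℕ) (h0 : 0 ∈ S)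
    (hdc : ∀ ⦃m n : ℕ⦄, m ≤ n → n ∈ S → m ∈ S) (n : ℕ) :
    (n : ℕ∞) ≤ (⨆ m ∈ S, (m : ℕ∞)) ↔ n ∈ S := by
  constructor
  · intro h
    by_contra hn
    have hne : n ≠ 0 := fun e => hn (e ▸ h0)
    have hb : (⨆ m ∈ S, (m : ℕ∞)) ≤ ((n - 1 : ℕ) : ℕ∞) := by
      refine iSup₂_le fun m hm => ?_
      have : m < n := lt_of_not_ge fun hle => hn (hdc hle hm)
      exact_mod_cast Nat.le_sub_one_of_lt this
    have h2 : (n : ℕ∞) ≤ ((n - 1 : ℕ) : ℕ∞) := h.trans hb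
    have : n ≤ n - 1 := by exact_mod_cast h2
    omega
  · intro hn
    exact le_iSup₂ (f := fun m (_ : m ∈ S) => (m : ℕ∞)) n hn

lemma enat_le_of_forall_nat {a b : ℕ∞} (h : ∀ n : ℕ, (n : ℕ∞) ≤ a → (n : ℕ∞) ≤ b) : a ≤ b := by
  cases a with
  | top =>
    cases b with
    | top => exact le_rfl
    | coe m =>
      have h1 := h (m + 1) le_top
      have : m + 1 ≤ m := by exact_mod_cast h1
      omega
  | coe n => exact h n le_rfl

lemma epow_top : epow ⊤ = 0 := rfl
lemma epow_coe (n : ℕ) : epow (n : ℕ∞) = 2⁻¹ ^ n := rfl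

lemma half_lt_one : (2⁻¹ : ℝ≥0) < 1 := by rw [inv_lt_one_iff₀]; norm_num

lemma epow_anti : Antitone epow := by
  intro a b hab
  cases b with
  | top => simp [epow_top]
  | coe m =>
    cases a with
    | top => exact absurd hab (by simp)
    | coe n =>
      have hnm : n ≤ m := by exact_mod_cast hab
      rw [epow_coe, epow_coe]
      exact pow_le_pow_of_le_one zero_le half_lt_one.le hnm

lemma epow_coe_ne_zero (n : ℕ) : epow (n : ℕ∞) ≠ 0 := by
  rw [epow_coe]
  exact pow_ne_zero n (by norm_num)

lemma epow_inj : Function.Injective epow := by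
  have hs : StrictAnti (fun n : ℕ => (2⁻¹ : ℝ≥0) ^ n) :=
    fun n m h => pow_lt_pow_right_of_lt_one₀ (by norm_num) half_lt_one h
  intro a b h
  cases a with
  | top =>
    cases b with
    | top => rfl
    | coe m => exact absurd h.symm (epow_coe_ne_zero m)
  | coe n =>
    cases b with
    | top => exact absurd h (epow_coe_ne_zero n)
    | coe m => exact congrArg _ (hs.injective h)

lemma nat_le_lcpLe_iff {α : Type*} [PartialOrder α] (x y : PWord α) (n : ℕ) :
    (n : ℕ∞) ≤ lcpLe x y ↔
      ∀ k, 1 ≤ k → k ≤ n → ∃ s t, x.toFun k = some s ∧ y.toFun k = some t ∧ s ≤ t := by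
  refine nat_le_biSup_iff _ ?_ ?_ n
  · intro k hk1 hk0; omega
  · intro m n hmn hn k hk1 hkm
    exact hn k hk1 (hkm.trans hmn)

lemma lcpLe_le_left_self {α : Type*} [PartialOrder α] (x y : PWord α) :
    lcpLe x y ≤ lcpLe x x := by
  refine enat_le_of_forall_nat fun n hn => ?_
  rw [nat_le_lcpLe_iff] at hn ⊢
  intro k hk1 hkn
  obtain ⟨s, t, hs, ht, _⟩ := hn k hk1 hkn
  exact ⟨s, s, hs, hs, le_rfl⟩

lemma lcpLe_le_right_self {α : Type*} [PartialOrder α] (x y : PWord α) :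
    lcpLe x y ≤ lcpLe y y := by
  refine enat_le_of_forall_nat fun n hn => ?_
  rw [nat_le_lcpLe_iff] at hn ⊢
  intro k hk1 hkn
  obtain ⟨s, t, hs, ht, _⟩ := hn k hk1 hkn
  exact ⟨t, t, ht, ht, le_rfl⟩

lemma PWord.isSome_of_le {α : Type*} (w : PWord α) {j k : ℕ} (hj1 : 1 ≤ j) (hjk : j ≤ k)
    (hk : (w.toFun k).isSome = true) : (w.toFun j).isSome = true := by
  induction k with
  | zero => omega
  | succ m ih =>
    rcases eq_or_lt_of_le hjk with rfl | h
    · exact hk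
    · exact ih (by omega) (w.mono' m (by omega) hk)

lemma PWord.ext' {α : Type*} {x y : PWord α} (h : x.toFun = y.toFun) : x = y := by
  cases x; cases y; simpa using h

/-- `q_B(x,y) = 2^{-l_⪯(x,y)}` is a partial quasi-metric on `Σ^∞`. -/
theorem baire_stmt15 {α : Type*} [Nonempty α] [PartialOrder α] :
    (∀ x y : PWord α, qB x x ≤ qB x y) ∧
      (∀ x y : PWord α, qB x x ≤ qB y x) ∧
      (∀ x y z : PWord α, qB x y + qB z z ≤ qB x z + qB z y) ∧
      (∀ x y : PWord α, (qB x x = qB x y ∧ qB y y = qB y x) ↔ x = y) := by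
  refine ⟨fun x y => epow_anti (lcpLe_le_left_self x y),
    fun x y => epow_anti (lcpLe_le_right_self y x), fun x y z => ?_, fun x y => ?_⟩
  · -- triangle
    set a := lcpLe x z with ha
    set b := lcpLe z y with hb
    have hmin : min a b ≤ lcpLe x y := by
      refine enat_le_of_forall_nat fun n hn => ?_
      have hna : (n : ℕ∞) ≤ a := hn.trans (min_le_left _ _)
      have hnb : (n : ℕ∞) ≤ b := hn.trans (min_le_right _ _)
      rw [ha, nat_le_lcpLe_iff] at hna
      rw [hb, nat_le_lcpLe_iff] at hnb
      rw [nat_le_lcpLe_iff]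
      intro k hk1 hkn
      obtain ⟨s, t, hs, ht, hst⟩ := hna k hk1 hkn
      obtain ⟨t', u, ht', hu, htu⟩ := hnb k hk1 hkn
      rw [ht'] at ht
      exact ⟨s, u, hs, hu, hst.trans ((Option.some_inj.mp ht) ▸ htu)⟩
    have hmax : max a b ≤ lcpLe z z :=
      max_le (ha ▸ lcpLe_le_right_self x z) (hb ▸ lcpLe_le_left_self z y)
    have key : epow (lcpLe x y) + epow (lcpLe z z) ≤ epow (min a b) + epow (max a b) :=
      add_le_add (epow_anti hmin) (epow_anti hmax)
    have heq : epow (min a b) + epow (max a b) = epow a + epow b := by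
      rcases le_total a b with h | h
      · rw [min_eq_left h, max_eq_right h]
      · rw [min_eq_right h, max_eq_left h, add_comm]
    calc qB x y + qB z z ≤ epow (min a b) + epow (max a b) := key
      _ = qB x z + qB z y := heq
  · constructor
    · rintro ⟨h1, h2⟩
      have e1 : lcpLe x x = lcpLe x y := epow_inj h1
      have e2 : lcpLe y y = lcpLe y x := epow_inj h2
      have hself : ∀ (w : PWord α) (k : ℕ), (w.toFun k).isSome = true →
          (k : ℕ∞) ≤ lcpLe w w := by
        intro w k hk
        rw [nat_le_lcpLe_iff]
        intro j hj1 hjk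
        obtain ⟨s, hs⟩ := Option.isSome_iff_exists.mp (w.isSome_of_le hj1 hjk hk)
        exact ⟨s, s, hs, hs, le_rfl⟩
      have hxy : ∀ k s, x.toFun k = some s → ∃ t, y.toFun k = some t ∧ s ≤ t := by
        intro k s hks
        rcases Nat.eq_zero_or_pos k with rfl | hk1
        · rw [x.map_zero'] at hks; exact absurd hks (by simp)
        · have hk : (k : ℕ∞) ≤ lcpLe x y := e1 ▸ hself x k (by rw [hks]; rfl)
          rw [nat_le_lcpLe_iff] at hk
          obtain ⟨s', t, hs', ht, hst⟩ := hk k hk1 le_rfl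
          rw [hks] at hs'
          exact ⟨t, ht, (Option.some_inj.mp hs') ▸ hst⟩
      have hyx : ∀ k t, y.toFun k = some t → ∃ s, x.toFun k = some s ∧ t ≤ s := by
        intro k t hkt
        rcases Nat.eq_zero_or_pos k with rfl | hk1
        · rw [y.map_zero'] at hkt; exact absurd hkt (by simp)
        · have hk : (k : ℕ∞) ≤ lcpLe y x := e2 ▸ hself y k (by rw [hkt]; rfl)
          rw [nat_le_lcpLe_iff] at hk
          obtain ⟨t', s, ht', hs, hts⟩ := hk k hk1 le_rfl
          rw [hkt] at ht'
          exact ⟨s, hs, (Option.some_inj.mp ht') ▸ hts⟩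
      refine PWord.ext' (funext fun k => ?_)
      cases hf : x.toFun k with
      | none =>
        cases hg : y.toFun k with
        | none => rfl
        | some t =>
          obtain ⟨s, hs, _⟩ := hyx k t hg
          rw [hf] at hs; exact absurd hs (by simp)
      | some s =>
        obtain ⟨t, ht, hst⟩ := hxy k s hf
        obtain ⟨s', hs', hts'⟩ := hyx k t ht
        rw [hf] at hs'
        rw [ht]
        exact congrArg _ (le_antisymm hst ((Option.some_inj.mp hs') ▸ hts'))
    · rintro rfl; exact ⟨rfl, rfl⟩
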